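/- Let x⋆ ∈ Ω (Ω = Π_i Ω_i convex) and suppose there exists τ⋆ ∈ ℝ^q such that (x⋆, τ⋆) is a stationary point of Ψ(x, τ): 0 ∈ ∇_x [τ⋆ᵀ Λ(x⋆)] + N_Ω(x⋆) and Λ(x⋆) = ∇Φ*(τ⋆), where Λ(x)_{(i,j)} = ‖x_i − x_j‖². Then x⋆ is a Nash stationary point of the SNL game: for each player i, 0 ∈ ∇_{x_i} J_i(x_i⋆, x_{-i}⋆) + N_{Ω_i}(x_i⋆). -/

import Mathlib

open Finset

/-- Normal cone of a convex set `C` at `x`. -/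
def normalCone {H : Type*} [NormedAddCommGroup H] [InnerProductSpace ℝ H]
    (C : Set H) (x : H) : Set H :=
  {e | ∀ y ∈ C, (inner ℝ e (y - x) : ℝ) ≤ 0}

section aux

variable {H : Type*} [NormedAddCommGroup H] [InnerProductSpace ℝ H] [CompleteSpace H]

lemma hasFDerivAt_normsq_sub (w x : H) :
    HasFDerivAt (fun y : H => ‖y - w‖ ^ 2)
      (InnerProductSpace.toDual ℝ H ((2 : ℝ) • (x - w))) x := by
  have h1 : HasFDerivAt (fun y : H => y - w) (ContinuousLinearMap.id ℝ H) x :=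
    (hasFDerivAt_id x).sub_const w
  have h2 := h1.inner ℝ h1
  have heq : (fun y : H => (inner ℝ (y - w) (y - w) : ℝ)) = fun y : H => ‖y - w‖ ^ 2 := by
    funext y; exact real_inner_self_eq_norm_sq _
  rw [heq] at h2
  refine h2.congr_fderiv ?_
  symm
  ext y
  simp only [InnerProductSpace.toDual_apply_apply, ContinuousLinearMap.coe_comp', Function.comp_apply,
    ContinuousLinearMap.prod_apply, ContinuousLinearMap.coe_id', id_eq, fderivInnerCLM_apply,
    real_inner_smul_left]
  rw [real_inner_comm y (x - w)]
  ring

lemma hasFDerivAt_normsq_sub' (w x : H) :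
    HasFDerivAt (fun y : H => ‖w - y‖ ^ 2)
      (InnerProductSpace.toDual ℝ H ((2 : ℝ) • (x - w))) x := by
  have := hasFDerivAt_normsq_sub w x
  have heq : (fun y : H => ‖y - w‖ ^ 2) = fun y : H => ‖w - y‖ ^ 2 := by
    funext y; rw [norm_sub_rev]
  rwa [heq] at this

end aux

/-- Theorem 1: if `(x⋆, τ⋆)` is a stationary point of the complementary function
`Ψ(x, τ) = τᵀΛ(x) − Φ*(τ)` (i.e. `0 ∈ ∇ₓ[τ⋆ᵀΛ(x⋆)] + N_Ω(x⋆)` and `Λ(x⋆) = ∇Φ*(τ⋆)`),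
then `x⋆` is a Nash stationary point of the SNL game. -/
theorem stmt9 (n N M q : ℕ) (a : Fin M → EuclideanSpace ℝ (Fin n))
    (ep : Fin q → (Fin N ⊕ Fin M) × (Fin N ⊕ Fin M)) (d : Fin q → ℝ)
    (Ω : Fin N → Set (EuclideanSpace ℝ (Fin n)))
    (hΩconv : ∀ i, Convex ℝ (Ω i)) (hΩcomp : ∀ i, IsCompact (Ω i))
    (Λ : (Fin N → EuclideanSpace ℝ (Fin n)) → Fin q → ℝ)
    (hΛ : ∀ x e, Λ x e = ‖Sum.elim x a (ep e).1 - Sum.elim x a (ep e).2‖ ^ 2)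
    (J : Fin N → (Fin N → EuclideanSpace ℝ (Fin n)) → ℝ)
    (hJ : ∀ i x, J i x =
      ∑ e ∈ Finset.univ.filter
        (fun e => (ep e).1 = Sum.inl i ∨ (ep e).2 = Sum.inl i),
        (Λ x e - (d e) ^ 2) ^ 2)
    (xs : Fin N → EuclideanSpace ℝ (Fin n)) (hxs : ∀ i, xs i ∈ Ω i)
    (τs : Fin q → ℝ)
    (hstat1 : ∀ i,
      -gradient (fun y => ∑ e, τs e * Λ (Function.update xs i y) e) (xs i)
        ∈ normalCone (Ω i) (xs i))
    (hstat2 : ∀ e, Λ xs e = τs e / 2 + (d e) ^ 2) :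
    ∀ i, -gradient (fun y => J i (Function.update xs i y)) (xs i)
      ∈ normalCone (Ω i) (xs i) := by
  intro i
  classical
  set pt : (Fin N ⊕ Fin M) → EuclideanSpace ℝ (Fin n) := Sum.elim xs a with hpt
  -- how update acts on endpoints
  have hupd : ∀ (y : EuclideanSpace ℝ (Fin n)) (s : Fin N ⊕ Fin M),
      Sum.elim (Function.update xs i y) a s = if s = Sum.inl i then y else pt s := by
    intro y s
    cases s with
    | inl j =>
      by_cases h : j = i
      · subst h; simp [pt]
      · simp [pt, Function.update_apply, h, Sum.inl.injEq]
    | inr m => simp [pt]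
  -- per-edge gradients
  set g : Fin q → EuclideanSpace ℝ (Fin n) := fun e =>
    if (ep e).1 = Sum.inl i then
      (if (ep e).2 = Sum.inl i then 0 else (2 : ℝ) • (xs i - pt (ep e).2))
    else
      (if (ep e).2 = Sum.inl i then (2 : ℝ) • (xs i - pt (ep e).1) else 0) with hgdef
  have hfe : ∀ (e : Fin q) (y : EuclideanSpace ℝ (Fin n)), Λ (Function.update xs i y) e =
      ‖(if (ep e).1 = Sum.inl i then y else pt (ep e).1)
        - (if (ep e).2 = Sum.inl i then y else pt (ep e).2)‖ ^ 2 := by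
    intro e y
    rw [hΛ, hupd, hupd]
  have hg : ∀ e : Fin q, HasFDerivAt (fun y : EuclideanSpace ℝ (Fin n) => Λ (Function.update xs i y) e)
      (InnerProductSpace.toDual ℝ (EuclideanSpace ℝ (Fin n)) (g e)) (xs i) := by
    intro e
    by_cases h1 : (ep e).1 = Sum.inl i <;> by_cases h2 : (ep e).2 = Sum.inl i
    · have heq : (fun y : EuclideanSpace ℝ (Fin n) => Λ (Function.update xs i y) e) = fun _ : EuclideanSpace ℝ (Fin n) => 0 := by
        funext y; rw [hfe e y]; simp [h1, h2]
      rw [heq]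
      have : g e = 0 := by simp [hgdef, h1, h2]
      rw [this, map_zero]
      exact hasFDerivAt_const 0 (xs i)
    · have heq : (fun y : EuclideanSpace ℝ (Fin n) => Λ (Function.update xs i y) e)
          = fun y : EuclideanSpace ℝ (Fin n) => ‖y - pt (ep e).2‖ ^ 2 := by
        funext y; rw [hfe e y]; simp [h1, h2]
      rw [heq]
      have : g e = (2 : ℝ) • (xs i - pt (ep e).2) := by simp [hgdef, h1, h2]
      rw [this]
      exact hasFDerivAt_normsq_sub _ _
    · have heq : (fun y : EuclideanSpace ℝ (Fin n) => Λ (Function.update xs i y) e)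
          = fun y : EuclideanSpace ℝ (Fin n) => ‖pt (ep e).1 - y‖ ^ 2 := by
        funext y; rw [hfe e y]; simp [h1, h2]
      rw [heq]
      have : g e = (2 : ℝ) • (xs i - pt (ep e).1) := by simp [hgdef, h1, h2]
      rw [this]
      exact hasFDerivAt_normsq_sub' _ _
    · have heq : (fun y : EuclideanSpace ℝ (Fin n) => Λ (Function.update xs i y) e)
          = fun _ : EuclideanSpace ℝ (Fin n) => ‖pt (ep e).1 - pt (ep e).2‖ ^ 2 := by
        funext y; rw [hfe e y]; simp [h1, h2]
      rw [heq]
      have : g e = 0 := by simp [hgdef, h1, h2]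
      rw [this, map_zero]
      exact hasFDerivAt_const _ (xs i)
  have hg0 : ∀ e : Fin q, ¬((ep e).1 = Sum.inl i ∨ (ep e).2 = Sum.inl i) → g e = 0 := by
    intro e he
    push_neg at he
    simp [hgdef, he.1, he.2]
  -- gradient of the potential-type function
  have hF : HasFDerivAt (fun y : EuclideanSpace ℝ (Fin n) => ∑ e, τs e * Λ (Function.update xs i y) e)
      (∑ e, τs e • InnerProductSpace.toDual ℝ (EuclideanSpace ℝ (Fin n)) (g e)) (xs i) :=
    HasFDerivAt.fun_sum (fun e _ => (hg e).const_mul (τs e))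
  have hdual : (∑ e, τs e • InnerProductSpace.toDual ℝ (EuclideanSpace ℝ (Fin n)) (g e))
      = InnerProductSpace.toDual ℝ (EuclideanSpace ℝ (Fin n)) (∑ e, τs e • g e) := by
    rw [map_sum]
    exact Finset.sum_congr rfl fun e _ => (map_smul _ _ _).symm
  have hgradF : gradient (fun y : EuclideanSpace ℝ (Fin n) => ∑ e, τs e * Λ (Function.update xs i y) e) (xs i)
      = ∑ e, τs e • g e := by
    rw [hdual] at hF
    have := hasFDerivAt_iff_hasGradientAt.mp hF
    rw [LinearIsometryEquiv.symm_apply_apply] at this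
    exact this.gradient
  -- gradient of J
  set S : Finset (Fin q) := Finset.univ.filter
    (fun e => (ep e).1 = Sum.inl i ∨ (ep e).2 = Sum.inl i) with hS
  have hJfun : (fun y : EuclideanSpace ℝ (Fin n) => J i (Function.update xs i y))
      = fun y : EuclideanSpace ℝ (Fin n) => ∑ e ∈ S, (Λ (Function.update xs i y) e - (d e) ^ 2) ^ 2 := by
    funext y; rw [hJ]
  have hval : ∀ e : Fin q, Λ (Function.update xs i (xs i)) e = Λ xs e := by
    intro e; rw [Function.update_eq_self]
  have hterm : ∀ e ∈ S, HasFDerivAt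
      (fun y : EuclideanSpace ℝ (Fin n) => (Λ (Function.update xs i y) e - (d e) ^ 2) ^ 2)
      (τs e • InnerProductSpace.toDual ℝ (EuclideanSpace ℝ (Fin n)) (g e)) (xs i) := by
    intro e _
    have hu : HasFDerivAt (fun y : EuclideanSpace ℝ (Fin n) => Λ (Function.update xs i y) e - (d e) ^ 2)
        (InnerProductSpace.toDual ℝ (EuclideanSpace ℝ (Fin n)) (g e)) (xs i) := (hg e).sub_const _
    have hm := hu.fun_mul hu
    have harg : Λ (Function.update xs i (xs i)) e - (d e) ^ 2 = τs e / 2 := by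
      rw [hval, hstat2]; ring
    have heq2 : (fun y : EuclideanSpace ℝ (Fin n) => (Λ (Function.update xs i y) e - (d e) ^ 2)
        * (Λ (Function.update xs i y) e - (d e) ^ 2))
        = fun y : EuclideanSpace ℝ (Fin n) => (Λ (Function.update xs i y) e - (d e) ^ 2) ^ 2 := by
      funext y; ring
    rw [heq2, harg] at hm
    refine hm.congr_fderiv ?_
    rw [← add_smul]
    congr 1
    ring
  have hJF : HasFDerivAt (fun y : EuclideanSpace ℝ (Fin n) => ∑ e ∈ S, (Λ (Function.update xs i y) e - (d e) ^ 2) ^ 2)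
      (∑ e ∈ S, τs e • InnerProductSpace.toDual ℝ (EuclideanSpace ℝ (Fin n)) (g e)) (xs i) :=
    HasFDerivAt.fun_sum hterm
  have hdualJ : (∑ e ∈ S, τs e • InnerProductSpace.toDual ℝ (EuclideanSpace ℝ (Fin n)) (g e))
      = InnerProductSpace.toDual ℝ (EuclideanSpace ℝ (Fin n)) (∑ e ∈ S, τs e • g e) := by
    rw [map_sum]
    exact Finset.sum_congr rfl fun e _ => (map_smul _ _ _).symm
  have hgradJ : gradient (fun y : EuclideanSpace ℝ (Fin n) => J i (Function.update xs i y)) (xs i)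
      = ∑ e ∈ S, τs e • g e := by
    rw [hJfun]
    rw [hdualJ] at hJF
    have := hasFDerivAt_iff_hasGradientAt.mp hJF
    rw [LinearIsometryEquiv.symm_apply_apply] at this
    exact this.gradient
  -- the two sums agree
  have hsums : (∑ e ∈ S, τs e • g e) = ∑ e, τs e • g e := by
    apply Finset.sum_subset (Finset.subset_univ S)
    intro e _ he
    have : ¬((ep e).1 = Sum.inl i ∨ (ep e).2 = Sum.inl i) := by
      intro h
      exact he (Finset.mem_filter.mpr ⟨Finset.mem_univ e, h⟩)
    rw [hg0 e this, smul_zero]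
  have h1 := hstat1 i
  rw [hgradF] at h1
  rw [hgradJ, hsums]
  exact h1
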